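/- arXiv:2308.11950 — 2 statements merged into one kernel-verified Lean document; each statement's English description precedes it below -/
import Mathlib

section
/- Let (X,≤) be a finite poset with |X| ≥ 2, let (T,B) be a tree decomposition of its cover graph of width t−1 such that T is a binary tree with leaf set X and x ∈ B(x) for every x ∈ X, and fix enumerations B(u) = {z^u_1,…,z^u_t} of the bags (repeating elements if |B(u)| < t, and with z^x_1 = x for each x ∈ X). Consider the associated NLC-decomposition with label set Q = 2^{[t]} × 2^{[t]} described in the context. Then for every node v of T and every x ∈ X∖X(v): L≤(x,v) = {(π^≥,π^≤) ∈ Q : there is j ∈ π^≤ with x ≤ z^v_j} and L≥(x,v) = {(π^≥,π^≤) ∈ Q : there is j ∈ π^≥ with x ≥ z^v_j}. -/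
/-! ### Poset dimension and Boolean dimension -/

/-- The (Dushnik–Miller) dimension of a poset: the least `d` such that the order
is the intersection of `d` linear orders on `X`. -/
noncomputable def posetDim (X : Type*) [PartialOrder X] : ℕ :=
  sInf {d : ℕ | ∃ L : Fin d → X → X → Prop,
    (∀ i, IsLinearOrder X (L i)) ∧ ∀ x y : X, x ≤ y ↔ ∀ i, L i x y}

/-- `(X,≤)` has a Boolean realizer of size `b`: linear orders `L 0, …, L (b-1)` and a
decoder `f` such that for distinct `x y`, `x ≤ y` iff `f` of the vector of truth values
`L i x y` holds.  Boolean dimension at most `b` is equivalent to this. -/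
def hasBoolRealizer (X : Type*) [PartialOrder X] (b : ℕ) : Prop :=
  ∃ (L : Fin b → X → X → Prop) (f : (Fin b → Prop) → Prop),
    (∀ i, IsLinearOrder X (L i)) ∧
    ∀ x y : X, x ≠ y → (x ≤ y ↔ f (fun i => L i x y))

/-! ### Standard examples -/

/-- The order of the standard example `S_k`: elements `a_i = inl i`, `b_j = inr j`,
with `a_i < b_j` iff `i ≠ j` and no other strict comparabilities. -/
def stdLE (k : ℕ) : Fin k ⊕ Fin k → Fin k ⊕ Fin k → Prop
  | Sum.inl i, Sum.inl j => i = j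
  | Sum.inr i, Sum.inr j => i = j
  | Sum.inl i, Sum.inr j => i ≠ j
  | Sum.inr _, Sum.inl _ => False

/-- `X` contains the standard example `S_k` as a subposet. -/
def ContainsStd (X : Type*) [PartialOrder X] (k : ℕ) : Prop :=
  ∃ φ : Fin k ⊕ Fin k → X, Function.Injective φ ∧
    ∀ p q, stdLE k p q ↔ φ p ≤ φ q

/-! ### Kelly examples -/

/-- Index type for the elements of the Kelly example `𝒦_k`:
`inl (inl j)` is `a_{j+2}`, `inl (inr j)` is `b_{j+2}`,
`inr (inl i)` is `c_{i+1}`, `inr (inr i)` is `d_{i+1}`. -/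
abbrev KellyIdx (k : ℕ) := (Fin (k - 2) ⊕ Fin (k - 2)) ⊕ (Fin (k - 1) ⊕ Fin (k - 1))

/-- Generating strict relations of the Kelly example `𝒦_k` (in actual indices:
`a_2,…,a_i < c_i`; `c_i < b_{i+1},…,b_{k-1}`; `a_{i+1},…,a_{k-1} < d_i`;
`d_i < b_2,…,b_i`; the chains `c_1 < ⋯ < c_{k-1}` and `d_1 > ⋯ > d_{k-1}`). -/
def kellyGen (k : ℕ) : KellyIdx k → KellyIdx k → Prop
  | Sum.inl (Sum.inl j), Sum.inr (Sum.inl i) => (j : ℕ) + 1 ≤ (i : ℕ)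
  | Sum.inr (Sum.inl i), Sum.inl (Sum.inr j) => (i : ℕ) ≤ (j : ℕ)
  | Sum.inl (Sum.inl j), Sum.inr (Sum.inr i) => (i : ℕ) ≤ (j : ℕ)
  | Sum.inr (Sum.inr i), Sum.inl (Sum.inr j) => (j : ℕ) + 1 ≤ (i : ℕ)
  | Sum.inr (Sum.inl i), Sum.inr (Sum.inl i') => (i : ℕ) < (i' : ℕ)
  | Sum.inr (Sum.inr i), Sum.inr (Sum.inr i') => (i' : ℕ) < (i : ℕ)
  | _, _ => False

/-- The order of the Kelly example `𝒦_k`: the reflexive-transitive closure of the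
generating relations. -/
def kellyLE (k : ℕ) : KellyIdx k → KellyIdx k → Prop :=
  Relation.ReflTransGen (kellyGen k)

/-- `X` contains the Kelly example `𝒦_k` as a subposet. -/
def ContainsKelly (X : Type*) [PartialOrder X] (k : ℕ) : Prop :=
  ∃ φ : KellyIdx k → X, Function.Injective φ ∧
    ∀ p q, kellyLE k p q ↔ φ p ≤ φ q

/-! ### Cover graphs, minors, tree decompositions -/

/-- `y` covers `x` with respect to the relation `r`. -/
def coverAdjOf {V : Type*} (r : V → V → Prop) (x y : V) : Prop :=
  x ≠ y ∧ r x y ∧ ∀ z, r x z → r z y → z = x ∨ z = y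

/-- The cover graph of the relation `r` (for a partial order `r`, vertices are joined
iff one covers the other). -/
def coverGraphOf {V : Type*} (r : V → V → Prop) : SimpleGraph V where
  Adj x y := coverAdjOf r x y ∨ coverAdjOf r y x
  symm := ⟨fun _ _ h => Or.symm h⟩
  loopless := ⟨fun _ h => by rcases h with h | h <;> exact h.1 rfl⟩

/-- `H` is a minor of `G`: there is a model of `H` in `G`, i.e. pairwise disjoint
branch sets inducing connected subgraphs, joined by edges of `G` for each edge of `H`. -/
def GraphIsMinor {V W : Type*} (H : SimpleGraph V) (G : SimpleGraph W) : Prop :=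
  ∃ M : V → Set W,
    (∀ x, (G.induce (M x)).Connected) ∧
    (∀ x y, x ≠ y → Disjoint (M x) (M y)) ∧
    (∀ x y, H.Adj x y → ∃ a ∈ M x, ∃ b ∈ M y, G.Adj a b)

/-- A tree decomposition of the graph `G` with nodes `ν`. -/
structure TreeDecomp {V : Type*} (G : SimpleGraph V) (ν : Type*) where
  tree : SimpleGraph ν
  isTree : tree.IsTree
  bag : ν → Set V
  bag_connected : ∀ v : V, (tree.induce {u | v ∈ bag u}).Connected
  bag_edge : ∀ x y : V, G.Adj x y → ∃ u, x ∈ bag u ∧ y ∈ bag u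

/-- `G` has treewidth at most `w`: it has a tree decomposition all of whose bags
have at most `w + 1` elements. -/
def treewidthLE {V : Type*} (G : SimpleGraph V) (w : ℕ) : Prop :=
  ∃ (ν : Type) (td : TreeDecomp G ν), ∀ u, (td.bag u).ncard ≤ w + 1

/-! ### Binary trees via positions -/

/-- A binary tree with leaves labelled by `X`. -/
inductive BTree (X : Type*) where
  | leaf (x : X)
  | node (l r : BTree X)

namespace BTree

/-- The subtree of `t` at position `p` (`false` = go left, `true` = go right). -/
def subtreeAt {X : Type*} : BTree X → List Bool → Option (BTree X)
  | t, [] => some t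
  | leaf _, _ :: _ => none
  | node l r, b :: p => subtreeAt (if b then r else l) p

/-- `p` is a valid position (node) of `t`. -/
def IsPos {X : Type*} (t : BTree X) (p : List Bool) : Prop :=
  (t.subtreeAt p).isSome

/-- `p` is an inner node of `t` (neither the root nor a leaf). -/
def IsInner {X : Type*} (t : BTree X) (p : List Bool) : Prop :=
  p ≠ [] ∧ ∃ l r : BTree X, t.subtreeAt p = some (node l r)

/-- The multiset of leaf labels of `t`. -/
def leaves {X : Type*} : BTree X → Multiset X
  | leaf x => {x}
  | node l r => leaves l + leaves r

end BTree

/-- Longest common prefix of two positions: the position of the lowest common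
ancestor of the two nodes. -/
def lcp : List Bool → List Bool → List Bool
  | a :: as, b :: bs => if a = b then a :: lcp as bs else []
  | _, _ => []

/-! ### NLC-decompositions -/

/-- An NLC-decomposition of the finite poset `(X, ≤)` with label set `Q`:
a binary tree with leaf set exactly `X`, initial labels `init`, relabelings
`rel u v : Q → Q` for `u` a strict ancestor of `v` satisfying the composition law,
and status relations `R`, `R'` encoding the order at lowest common ancestors. -/
structure NLCDecomp (X : Type*) [PartialOrder X] [Fintype X] (Q : Type*) where
  tree : BTree X
  pos : X → List Bool
  pos_spec : ∀ x, tree.subtreeAt (pos x) = some (BTree.leaf x)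
  leaves_eq : tree.leaves = (Finset.univ : Finset X).val
  init : X → Q
  rel : List Bool → List Bool → Q → Q
  rel_comp : ∀ u v w : List Bool, tree.IsPos w →
    u <+: v → u ≠ v → v <+: w → v ≠ w →
    ∀ γ : Q, rel u v (rel v w γ) = rel u w γ
  R : List Bool → Set (Q × Q)
  R' : List Bool → Set (Q × Q)
  encode : ∀ x y : X, x ≠ y →
    (lcp (pos x) (pos y) ++ [false]) <+: pos x →
    (lcp (pos x) (pos y) ++ [true]) <+: pos y →
    ((x ≤ y ↔ (rel (lcp (pos x) (pos y)) (pos x) (init x),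
               rel (lcp (pos x) (pos y)) (pos y) (init y)) ∈ R (lcp (pos x) (pos y))) ∧
     (y ≤ x ↔ (rel (lcp (pos x) (pos y)) (pos y) (init y),
               rel (lcp (pos x) (pos y)) (pos x) (init x)) ∈ R' (lcp (pos x) (pos y))))

namespace NLCDecomp

variable {X Q : Type*} [PartialOrder X] [Fintype X]

/-- The label `ℓ(u,x)` of the leaf `x` at its ancestor `u`. -/
def lab (D : NLCDecomp X Q) (u : List Bool) (x : X) : Q :=
  if u = D.pos x then D.init x else D.rel u (D.pos x) (D.init x)

/-- The set `L≤(x,v)` of labels `γ` such that `x ≤ γ` at `v`, for `x ∉ X(v)`. -/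
def Lle (D : NLCDecomp X Q) (x : X) (v : List Bool) : Set Q :=
  { γ | ((lcp (D.pos x) v ++ [false]) <+: D.pos x ∧
          (D.lab (lcp (D.pos x) v) x, D.rel (lcp (D.pos x) v) v γ) ∈ D.R (lcp (D.pos x) v)) ∨
        (¬ (lcp (D.pos x) v ++ [false]) <+: D.pos x ∧
          (D.rel (lcp (D.pos x) v) v γ, D.lab (lcp (D.pos x) v) x) ∈ D.R' (lcp (D.pos x) v)) }

/-- The set `L≥(x,v)` of labels `γ` such that `x ≥ γ` at `v`, for `x ∉ X(v)`. -/
def Lge (D : NLCDecomp X Q) (x : X) (v : List Bool) : Set Q :=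
  { γ | ((lcp (D.pos x) v ++ [false]) <+: D.pos x ∧
          (D.lab (lcp (D.pos x) v) x, D.rel (lcp (D.pos x) v) v γ) ∈ D.R' (lcp (D.pos x) v)) ∨
        (¬ (lcp (D.pos x) v ++ [false]) <+: D.pos x ∧
          (D.rel (lcp (D.pos x) v) v γ, D.lab (lcp (D.pos x) v) x) ∈ D.R (lcp (D.pos x) v)) }

end NLCDecomp

/-- `X` has NLC-width at most `q`. -/
def nlcWidthLE (X : Type*) [PartialOrder X] [Fintype X] (q : ℕ) : Prop :=
  ∃ m : ℕ, m ≤ q ∧ Nonempty (NLCDecomp X (Fin m))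

/-! ### Splits, h-neighbors, h-chains, h-crosses -/

/-- `u` and `v` are `h`-neighbors with respect to the split `s`. -/
def HNbr {X Q : Type*} [PartialOrder X] [Fintype X] (D : NLCDecomp X Q)
    (s : List Bool → ℕ) (h : ℕ) (u v : List Bool) : Prop :=
  D.tree.IsInner u ∧ D.tree.IsInner v ∧ u <+: v ∧ u ≠ v ∧ s u = h ∧ s v = h ∧
    ∀ w, u <+: w → w <+: v → w ≠ u → w ≠ v → s w ≤ h

/-- `s` is a decent split of order `p`: it maps inner nodes into `[p]` and is
forward Ramseyan with respect to the relabeling assignment of `D`. -/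
def DecentSplit {X Q : Type*} [PartialOrder X] [Fintype X] (D : NLCDecomp X Q)
    (s : List Bool → ℕ) (p : ℕ) : Prop :=
  (∀ u, D.tree.IsInner u → 1 ≤ s u ∧ s u ≤ p) ∧
  (∀ h u v u' v', HNbr D s h u v → HNbr D s h u' v' →
    ∀ γ : Q, D.rel u v (D.rel u' v' γ) = D.rel u v γ)

/-- The set `E_h` of relabelings between `h`-neighbors. -/
def Eh {X Q : Type*} [PartialOrder X] [Fintype X] (D : NLCDecomp X Q)
    (s : List Bool → ℕ) (h : ℕ) : Set (Q → Q) :=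
  { σ | ∃ u v, HNbr D s h u v ∧ σ = D.rel u v }

/-- `A` is an `E_h`-class (an equivalence class of `α ≡_h β ⇔ ∀ σ ∈ E_h, σ α = σ β`). -/
def IsEhClass {X Q : Type*} [PartialOrder X] [Fintype X] (D : NLCDecomp X Q)
    (s : List Bool → ℕ) (h : ℕ) (A : Set Q) : Prop :=
  ∃ α : Q, A = { β : Q | ∀ σ ∈ Eh D s h, σ β = σ α }

/-- `c 0, c 1, …, c ℓ` is an `h`-chain of length `ℓ`: mutual `h`-neighbors,
each a strict ancestor of the next. -/
def IsHChain {X Q : Type*} [PartialOrder X] [Fintype X] (D : NLCDecomp X Q)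
    (s : List Bool → ℕ) (h ℓ : ℕ) (c : ℕ → List Bool) : Prop :=
  ∀ i j : ℕ, i < j → j ≤ ℓ → HNbr D s h (c i) (c j)

/-- There exists an `h`-cross. -/
def HCross {X Q : Type*} [PartialOrder X] [Fintype X] (D : NLCDecomp X Q)
    (s : List Bool → ℕ) (h : ℕ) : Prop :=
  ∃ (u v : List Bool) (x y : X) (σ : Q → Q),
    HNbr D s h u v ∧
    u <+: D.pos x ∧ ¬ v <+: D.pos x ∧
    u <+: D.pos y ∧ ¬ v <+: D.pos y ∧
    ¬ x ≤ y ∧ ¬ y ≤ x ∧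
    σ ∈ Eh D s h ∧
    σ (D.lab u x) ∈ D.Lge y v ∧ σ (D.lab u y) ∈ D.Lle x v

/-! ### Rooted trees (general), consistent orders, semigroup labelings -/

/-- A rooted tree on the node set `ν`, given by its parent function. -/
structure ParentTree (ν : Type*) where
  root : ν
  parent : ν → ν
  parent_root : parent root = root
  reach : ∀ v, ∃ n : ℕ, parent^[n] v = root

namespace ParentTree

/-- `u` is an ancestor of `v` (allowing `u = v`). -/
def Anc {ν : Type*} (T : ParentTree ν) (u v : ν) : Prop :=
  ∃ n : ℕ, T.parent^[n] v = u

/-- `v` is a leaf of `T`. -/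
def IsLeaf {ν : Type*} (T : ParentTree ν) (v : ν) : Prop :=
  ∀ w, T.parent w = v → w = v

/-- `u` is the lowest common ancestor of `x` and `y`. -/
def IsLCA {ν : Type*} (T : ParentTree ν) (u x y : ν) : Prop :=
  T.Anc u x ∧ T.Anc u y ∧ ∀ w, T.Anc w x → T.Anc w y → T.Anc w u

end ParentTree

/-- The linear order `r` on the leaf set (through `ι : Z → ν`) is consistent with the
tree `T`: the leaves below any node form a contiguous interval of `r`. -/
def ConsistentOrder {ν Z : Type*} (T : ParentTree ν) (ι : Z → ν) (r : Z → Z → Prop) : Prop :=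
  IsLinearOrder Z r ∧ ∀ u : ν, ∀ a b c : Z, r a b → r b c →
    T.Anc u (ι a) → T.Anc u (ι c) → T.Anc u (ι b)

/-- `lam` is a `(Λ,·)`-labeling of the rooted tree `T`. -/
def SGLabeling {ν Λ : Type*} [Mul Λ] (T : ParentTree ν) (lam : ν → ν → Λ) : Prop :=
  ∀ u v w, T.Anc u v → u ≠ v → T.Anc v w → v ≠ w → lam u v * lam v w = lam u w

/-! ### Rooted (binary) tree decompositions -/

/-- A tree decomposition of `G` over a binary tree whose leaf set is exactly the
vertex set of `G`; nodes are positions, bags are attached to positions, and the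
connectivity condition is expressed via paths in the tree. -/
structure BTreeDecomp (X : Type*) [Fintype X] (G : SimpleGraph X) where
  tree : BTree X
  pos : X → List Bool
  pos_spec : ∀ x, tree.subtreeAt (pos x) = some (BTree.leaf x)
  leaves_eq : tree.leaves = (Finset.univ : Finset X).val
  bag : List Bool → Set X
  bag_nonempty : ∀ x : X, ∃ p, tree.IsPos p ∧ x ∈ bag p
  bag_path : ∀ x : X, ∀ p q r : List Bool, tree.IsPos p → tree.IsPos q →
    x ∈ bag p → x ∈ bag q → lcp p q <+: r → (r <+: p ∨ r <+: q) → x ∈ bag r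
  bag_edge : ∀ x y : X, G.Adj x y → ∃ p, tree.IsPos p ∧ x ∈ bag p ∧ y ∈ bag p

/-! ### Alternating cycles -/

/-- `(x 0, y 0), …, (x (m-1), y (m-1))` is a (strict) alternating cycle:
the pairs are incomparable, `x i ≤ y (i+1 mod m)`, and these are the only
comparabilities among the listed elements. -/
def IsAltCycle {X : Type*} [PartialOrder X] (m : ℕ) (x y : ℕ → X) : Prop :=
  2 ≤ m ∧
  (∀ i < m, ¬ x i ≤ y i ∧ ¬ y i ≤ x i) ∧
  (∀ i < m, x i ≤ y ((i + 1) % m)) ∧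
  (∀ i < m, ∀ j < m, x i ≤ y j → j = (i + 1) % m) ∧
  (∀ i < m, ∀ j < m, x i ≤ x j → x i = x j) ∧
  (∀ i < m, ∀ j < m, y i ≤ y j → y i = y j) ∧
  (∀ i < m, ∀ j < m, y i ≤ x j → y i = x j)


section AuxL17

open Relation

private theorem lcp_prefix_left' : ∀ p q : List Bool, lcp p q <+: p := by
  intro p
  induction p with
  | nil => intro q; cases q <;> simp [lcp]
  | cons a as ih =>
    intro q
    cases q with
    | nil => simp [lcp]
    | cons b bs =>
      by_cases h : a = b <;> simp [lcp, h, List.cons_prefix_cons, ih]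

private theorem lcp_prefix_right' : ∀ p q : List Bool, lcp p q <+: q := by
  intro p
  induction p with
  | nil => intro q; cases q <;> simp [lcp]
  | cons a as ih =>
    intro q
    cases q with
    | nil => simp [lcp]
    | cons b bs =>
      by_cases h : a = b <;> simp [lcp, h, List.cons_prefix_cons, ih]

private theorem prefix_lcp' : ∀ (l p q : List Bool), l <+: p → l <+: q → l <+: lcp p q := by
  intro l
  induction l with
  | nil => intro p q _ _; exact List.nil_prefix
  | cons a l' ih =>
    intro p q h1 h2
    cases p with
    | nil => simp at h1
    | cons b p' =>
      cases q with
      | nil => simp at h2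
      | cons c q' =>
        rw [List.cons_prefix_cons] at h1 h2
        obtain ⟨rfl, h1⟩ := h1
        obtain ⟨rfl, h2⟩ := h2
        simp [lcp, List.cons_prefix_cons]
        exact ih _ _ h1 h2

private theorem lcp_append_cons_ne' : ∀ (u : List Bool) (a b : Bool) (s s' : List Bool),
    a ≠ b → lcp (u ++ a :: s) (u ++ b :: s') = u := by
  intro u
  induction u with
  | nil => intro a b s s' h; simp [lcp, h]
  | cons c u' ih => intro a b s s' h; simp [lcp, ih _ _ _ _ h]

private theorem subtreeAt_append' {X : Type*} (p q : List Bool) :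
    ∀ t : BTree X, t.subtreeAt (p ++ q) = (t.subtreeAt p).bind (fun s => s.subtreeAt q) := by
  induction p with
  | nil => intro t; simp [BTree.subtreeAt]
  | cons b p' ih =>
    intro t
    cases t with
    | leaf x => simp [BTree.subtreeAt]
    | node l r => simp [BTree.subtreeAt, ih]

private theorem exists_cons_of_strict_prefix' {l p : List Bool} (h : l <+: p) (hne : l ≠ p) :
    ∃ b r, p = l ++ b :: r := by
  obtain ⟨s, rfl⟩ := h
  cases s with
  | nil => simp at hne
  | cons b r => exact ⟨b, r, rfl⟩

private theorem rtg_covby_le' {X : Type*} [PartialOrder X] {a b : X}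
    (h : Relation.ReflTransGen (· ⋖ ·) a b) : a ≤ b := by
  induction h with
  | refl => exact le_refl _
  | tail _ h2 ih => exact ih.trans h2.le

private theorem covby_adj' {X : Type*} [PartialOrder X] {x y : X} (h : x ⋖ y) :
    (coverGraphOf ((· ≤ ·) : X → X → Prop)).Adj x y := by
  refine Or.inl ⟨h.lt.ne, h.le, fun z hxz hzy => ?_⟩
  rcases hxz.lt_or_eq with h1 | h1
  · rcases hzy.lt_or_eq with h2 | h2
    · exact (h.2 h1 h2).elim
    · exact Or.inr h2
  · exact Or.inl h1.symm

private theorem claimA' {t : ℕ} {X : Type} (z : List Bool → Fin t → X) (Pos : List Bool → Prop)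
    (hconn : ∀ x : X, ∀ p q r : List Bool, Pos p → Pos q →
      (∃ i, z p i = x) → (∃ i, z q i = x) → lcp p q <+: r → (r <+: p ∨ r <+: q) → ∃ i, z r i = x)
    (u : List Bool) (bv : Bool) {w : X} {p q : List Bool}
    (hp : Pos p) (hq : Pos q) (hwp : ∃ i, z p i = w) (hwq : ∃ i, z q i = w)
    (hnp : ¬ (u ++ [bv]) <+: p) (hsq : (u ++ [bv]) <+: q) : ∃ i, z u i = w := by
  by_cases hup : u <+: p
  · by_cases hpe : p = u
    · exact hpe ▸ hwp
    · obtain ⟨c, rp, rfl⟩ := exists_cons_of_strict_prefix' hup (fun h => hpe h.symm)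
      obtain ⟨rq, rfl⟩ := hsq
      have hcb : c ≠ bv := by rintro rfl; exact hnp ⟨rp, by simp⟩
      have hl : lcp (u ++ c :: rp) ((u ++ [bv]) ++ rq) = u := by
        rw [List.append_assoc]
        simpa using lcp_append_cons_ne' u c bv rp rq hcb
      exact hconn w _ _ u hp hq hwp hwq (by rw [hl]) (Or.inl hup)
  · have h1 : lcp p q <+: q := lcp_prefix_right' p q
    have h2 : u <+: q := (u.prefix_append [bv]).trans hsq
    rcases List.prefix_or_prefix_of_prefix h1 h2 with h | h
    · exact hconn w p q u hp hq hwp hwq h (Or.inr h2)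
    · exact absurd (h.trans (lcp_prefix_left' p q)) hup

private theorem sepL' {t : ℕ} {X : Type} [PartialOrder X]
    (z : List Bool → Fin t → X) (Pos : List Bool → Prop)
    (hconn : ∀ x : X, ∀ p q r : List Bool, Pos p → Pos q →
      (∃ i, z p i = x) → (∃ i, z q i = x) → lcp p q <+: r → (r <+: p ∨ r <+: q) → ∃ i, z r i = x)
    (hedge : ∀ x y : X, x ⋖ y → ∃ p, Pos p ∧ (∃ i, z p i = x) ∧ (∃ j, z p j = y))
    (u : List Bool) (bv : Bool) {a b : X}
    (hab : Relation.ReflTransGen (· ⋖ ·) a b)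
    {q : List Bool} (hq : Pos q) (hbq : ∃ i, z q i = b) (hsq : (u ++ [bv]) <+: q) :
    ∀ p, Pos p → (∃ i, z p i = a) → ¬ (u ++ [bv]) <+: p →
      ∃ w, a ≤ w ∧ w ≤ b ∧ ∃ i, z u i = w := by
  induction hab using Relation.ReflTransGen.head_induction_on with
  | refl =>
    intro p hp hap hnp
    exact ⟨b, le_refl _, le_refl _, claimA' z Pos hconn u bv hp hq hap hbq hnp hsq⟩
  | head hac hcb ih =>
    intro p hp hap hnp
    obtain ⟨pe, hpe, hape, hcpe⟩ := hedge _ _ hac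
    by_cases hs : (u ++ [bv]) <+: pe
    · exact ⟨_, le_refl _, hac.le.trans (rtg_covby_le' hcb),
        claimA' z Pos hconn u bv hp hpe hap hape hnp hs⟩
    · obtain ⟨w, h1, h2, h3⟩ := ih pe hpe hcpe hs
      exact ⟨w, hac.le.trans h1, h2, h3⟩

private theorem sepR' {t : ℕ} {X : Type} [PartialOrder X]
    (z : List Bool → Fin t → X) (Pos : List Bool → Prop)
    (hconn : ∀ x : X, ∀ p q r : List Bool, Pos p → Pos q →
      (∃ i, z p i = x) → (∃ i, z q i = x) → lcp p q <+: r → (r <+: p ∨ r <+: q) → ∃ i, z r i = x)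
    (hedge : ∀ x y : X, x ⋖ y → ∃ p, Pos p ∧ (∃ i, z p i = x) ∧ (∃ j, z p j = y))
    (u : List Bool) (bv : Bool) {a b : X}
    (hab : Relation.ReflTransGen (· ⋖ ·) a b)
    {p : List Bool} (hp : Pos p) (hbp : ∃ i, z p i = b) (hnp : ¬ (u ++ [bv]) <+: p) :
    ∀ q, Pos q → (∃ i, z q i = a) → (u ++ [bv]) <+: q →
      ∃ w, a ≤ w ∧ w ≤ b ∧ ∃ i, z u i = w := by
  induction hab using Relation.ReflTransGen.head_induction_on with
  | refl =>
    intro q hq haq hsq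
    exact ⟨b, le_refl _, le_refl _, claimA' z Pos hconn u bv hp hq hbp haq hnp hsq⟩
  | head hac hcb ih =>
    intro q hq haq hsq
    obtain ⟨pe, hpe, hape, hcpe⟩ := hedge _ _ hac
    by_cases hs : (u ++ [bv]) <+: pe
    · obtain ⟨w, h1, h2, h3⟩ := ih pe hpe hcpe hs
      exact ⟨w, hac.le.trans h1, h2, h3⟩
    · exact ⟨_, le_refl _, hac.le.trans (rtg_covby_le' hcb),
        claimA' z Pos hconn u bv hpe hq hape haq hs hsq⟩

end AuxL17

/-! ### STATEMENT 17: the L-sets of the NLC-decomposition derived from a tree decomposition -/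

theorem L_sets_of_treewidth_decomp (t : ℕ) (ht : 1 ≤ t)
    (X : Type) [PartialOrder X] [Fintype X] (hX : 2 ≤ Fintype.card X)
    (z : List Bool → Fin t → X)
    (D : NLCDecomp X (Set (Fin t) × Set (Fin t)))
    (hbagmem : ∀ x : X, z (D.pos x) ⟨0, ht⟩ = x)
    (hconn : ∀ x : X, ∀ p q r : List Bool, D.tree.IsPos p → D.tree.IsPos q →
      (∃ i, z p i = x) → (∃ i, z q i = x) →
      lcp p q <+: r → (r <+: p ∨ r <+: q) → ∃ i, z r i = x)
    (hedge : ∀ x y : X, (coverGraphOf ((· ≤ ·) : X → X → Prop)).Adj x y →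
      ∃ p, D.tree.IsPos p ∧ (∃ i, z p i = x) ∧ (∃ j, z p j = y))
    (hinit : ∀ x : X, D.init x =
      ({ i | x ≤ z (D.pos x) i }, { i | z (D.pos x) i ≤ x }))
    (hrel : ∀ u v : List Bool, D.tree.IsPos v → u <+: v → u ≠ v →
      ∀ π : Set (Fin t) × Set (Fin t),
        D.rel u v π = ({ i | ∃ j ∈ π.1, z v j ≤ z u i }, { i | ∃ j ∈ π.2, z u i ≤ z v j }))
    (hR : ∀ u, D.R u = { αβ | ∃ i, i ∈ αβ.1.1 ∧ i ∈ αβ.2.2 })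
    (hR' : ∀ u, D.R' u = { αβ | ∃ i, i ∈ αβ.1.2 ∧ i ∈ αβ.2.1 }) :
    ∀ v : List Bool, D.tree.IsPos v → ∀ x : X, ¬ v <+: D.pos x →
      D.Lle x v = { π : Set (Fin t) × Set (Fin t) | ∃ j ∈ π.2, x ≤ z v j } ∧
      D.Lge x v = { π : Set (Fin t) × Set (Fin t) | ∃ j ∈ π.1, z v j ≤ x } := by
  intro v hv x hxv
  classical
  have : LocallyFiniteOrder X := Fintype.toLocallyFiniteOrder
  have hpx : D.tree.IsPos (D.pos x) := by
    unfold BTree.IsPos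
    rw [D.pos_spec x]
    rfl
  have hpxv : ¬ D.pos x <+: v := by
    rintro ⟨s, rfl⟩
    cases s with
    | nil => exact hxv (by simp)
    | cons b s' =>
      have h := hv
      unfold BTree.IsPos at h
      rw [subtreeAt_append', D.pos_spec x] at h
      simp [BTree.subtreeAt] at h
  have hux : lcp (D.pos x) v <+: D.pos x := lcp_prefix_left' _ _
  have huv : lcp (D.pos x) v <+: v := lcp_prefix_right' _ _
  have hne_upx : lcp (D.pos x) v ≠ D.pos x := fun h => hpxv (h ▸ huv)
  have hne_uv : lcp (D.pos x) v ≠ v := fun h => hxv (h ▸ hux)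
  obtain ⟨bx, rx, hrx⟩ := exists_cons_of_strict_prefix' hux hne_upx
  obtain ⟨bv, rv, hrv⟩ := exists_cons_of_strict_prefix' huv hne_uv
  have hbxbv : bx ≠ bv := by
    rintro rfl
    have h1 : lcp (D.pos x) v ++ [bx] <+: D.pos x := ⟨rx, by simpa using hrx.symm⟩
    have h2 : lcp (D.pos x) v ++ [bx] <+: v := ⟨rv, by simpa using hrv.symm⟩
    have h3 := prefix_lcp' _ _ _ h1 h2
    simpa using h3.length_le
  have hsv : lcp (D.pos x) v ++ [bv] <+: v := ⟨rv, by simpa using hrv.symm⟩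
  have hnsx : ¬ lcp (D.pos x) v ++ [bv] <+: D.pos x := by
    intro h
    have h1 : lcp (D.pos x) v ++ [bx] <+: D.pos x := ⟨rx, by simpa using hrx.symm⟩
    have h2 : lcp (D.pos x) v ++ [bv] = lcp (D.pos x) v ++ [bx] := by
      rcases List.prefix_or_prefix_of_prefix h h1 with h2 | h2
      · exact h2.eq_of_length (by simp)
      · exact (h2.eq_of_length (by simp)).symm
    simp at h2
    exact hbxbv h2.symm
  have hedge' : ∀ a b : X, a ⋖ b → ∃ p, D.tree.IsPos p ∧ (∃ i, z p i = a) ∧ (∃ j, z p j = b) :=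
    fun a b h => hedge a b (covby_adj' h)
  have key1 : ∀ j : Fin t, x ≤ z v j →
      ∃ i, x ≤ z (lcp (D.pos x) v) i ∧ z (lcp (D.pos x) v) i ≤ z v j := by
    intro j hj
    have hchain : Relation.ReflTransGen (· ⋖ ·) x (z v j) := le_iff_reflTransGen_covBy.mp hj
    obtain ⟨w, h1, h2, i, hi⟩ := sepL' z D.tree.IsPos hconn hedge' (lcp (D.pos x) v) bv hchain
      hv ⟨j, rfl⟩ hsv (D.pos x) hpx ⟨⟨0, ht⟩, hbagmem x⟩ hnsx
    exact ⟨i, hi ▸ h1, hi ▸ h2⟩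
  have key2 : ∀ j : Fin t, z v j ≤ x →
      ∃ i, z v j ≤ z (lcp (D.pos x) v) i ∧ z (lcp (D.pos x) v) i ≤ x := by
    intro j hj
    have hchain : Relation.ReflTransGen (· ⋖ ·) (z v j) x := le_iff_reflTransGen_covBy.mp hj
    obtain ⟨w, h1, h2, i, hi⟩ := sepR' z D.tree.IsPos hconn hedge' (lcp (D.pos x) v) bv hchain
      hpx ⟨⟨0, ht⟩, hbagmem x⟩ hnsx v hv ⟨j, rfl⟩ hsv
    exact ⟨i, hi ▸ h1, hi ▸ h2⟩
  have hbag0 : z (D.pos x) ⟨0, ht⟩ = x := hbagmem x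
  constructor
  · ext γ
    simp only [NLCDecomp.Lle, NLCDecomp.lab, Set.mem_setOf_eq, if_neg hne_upx]
    rw [hrel _ _ hpx hux hne_upx, hrel _ _ hv huv hne_uv, hinit, hR, hR']
    by_cases hside : lcp (D.pos x) v ++ [false] <+: D.pos x
    · simp only [hside, true_and, not_true, false_and, or_false, Set.mem_setOf_eq]
      constructor
      · rintro ⟨i, ⟨j1, hj1, hj1'⟩, j, hj, hj'⟩
        exact ⟨j, hj, le_trans (le_trans hj1 hj1') hj'⟩
      · rintro ⟨j, hj, hxj⟩
        obtain ⟨i, hi1, hi2⟩ := key1 j hxj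
        exact ⟨i, ⟨⟨0, ht⟩, by rw [hbag0], by rw [hbag0]; exact hi1⟩, j, hj, hi2⟩
    · simp only [hside, false_and, not_false_iff, true_and, false_or, Set.mem_setOf_eq]
      constructor
      · rintro ⟨i, ⟨j, hj, hj'⟩, j1, hj1, hj1'⟩
        exact ⟨j, hj, le_trans (le_trans hj1 hj1') hj'⟩
      · rintro ⟨j, hj, hxj⟩
        obtain ⟨i, hi1, hi2⟩ := key1 j hxj
        exact ⟨i, ⟨j, hj, hi2⟩, ⟨0, ht⟩, by rw [hbag0], by rw [hbag0]; exact hi1⟩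
  · ext γ
    simp only [NLCDecomp.Lge, NLCDecomp.lab, Set.mem_setOf_eq, if_neg hne_upx]
    rw [hrel _ _ hpx hux hne_upx, hrel _ _ hv huv hne_uv, hinit, hR, hR']
    by_cases hside : lcp (D.pos x) v ++ [false] <+: D.pos x
    · simp only [hside, true_and, not_true, false_and, or_false, Set.mem_setOf_eq]
      constructor
      · rintro ⟨i, ⟨j1, hj1, hj1'⟩, j, hj, hj'⟩
        exact ⟨j, hj, le_trans (le_trans hj' hj1') hj1⟩
      · rintro ⟨j, hj, hxj⟩
        obtain ⟨i, hi1, hi2⟩ := key2 j hxj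
        exact ⟨i, ⟨⟨0, ht⟩, by rw [hbag0], by rw [hbag0]; exact hi2⟩, j, hj, hi1⟩
    · simp only [hside, false_and, not_false_iff, true_and, false_or, Set.mem_setOf_eq]
      constructor
      · rintro ⟨i, ⟨j, hj, hj'⟩, j1, hj1, hj1'⟩
        exact ⟨j, hj, le_trans (le_trans hj' hj1') hj1⟩
      · rintro ⟨j, hj, hxj⟩
        obtain ⟨i, hi1, hi2⟩ := key2 j hxj
        exact ⟨i, ⟨j, hj, hi1⟩, ⟨0, ht⟩, by rw [hbag0], by rw [hbag0]; exact hi2⟩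
end

section
/- For every integer k ≥ 3, the Kelly example 𝒦_k contains the standard example S_k as a subposet; specifically, the k pairs (c_1,d_1), (a_2,b_2), …, (a_{k−1},b_{k−1}), (d_{k−1},c_{k−1}) of elements of 𝒦_k induce a subposet isomorphic to S_k (the first coordinates playing the roles of a_1,…,a_k of S_k and the second coordinates the roles of b_1,…,b_k). -/
/-! ### Auxiliary: closed form of the Kelly order -/

/-- Closed form of the Kelly order. -/
def KLE (k : ℕ) : KellyIdx k → KellyIdx k → Prop
  | Sum.inl (Sum.inl j), Sum.inl (Sum.inl j') => (j : ℕ) = (j' : ℕ)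
  | Sum.inl (Sum.inl j), Sum.inl (Sum.inr j') => (j : ℕ) ≠ (j' : ℕ)
  | Sum.inl (Sum.inl j), Sum.inr (Sum.inl i) => (j : ℕ) + 1 ≤ (i : ℕ)
  | Sum.inl (Sum.inl j), Sum.inr (Sum.inr i) => (i : ℕ) ≤ (j : ℕ)
  | Sum.inl (Sum.inr j), Sum.inl (Sum.inr j') => (j : ℕ) = (j' : ℕ)
  | Sum.inr (Sum.inl i), Sum.inl (Sum.inr j) => (i : ℕ) ≤ (j : ℕ)
  | Sum.inr (Sum.inl i), Sum.inr (Sum.inl i') => (i : ℕ) ≤ (i' : ℕ)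
  | Sum.inr (Sum.inr i), Sum.inl (Sum.inr j) => (j : ℕ) + 1 ≤ (i : ℕ)
  | Sum.inr (Sum.inr i), Sum.inr (Sum.inr i') => (i' : ℕ) ≤ (i : ℕ)
  | _, _ => False

lemma kle_refl {k : ℕ} (p : KellyIdx k) : KLE k p p := by
  rcases p with (j | j) | (i | i) <;> simp [KLE]

lemma kle_tail {k : ℕ} {p q r : KellyIdx k} (h : KLE k p q) (g : kellyGen k q r) :
    KLE k p r := by
  rcases p with (j | j) | (i | i) <;> rcases q with (j' | j') | (i' | i') <;>
    rcases r with (j'' | j'') | (i'' | i'') <;>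
    simp only [KLE, kellyGen] at h g ⊢ <;> omega

lemma kle_of_kellyLE {k : ℕ} {p q : KellyIdx k} (h : kellyLE k p q) : KLE k p q := by
  induction h with
  | refl => exact kle_refl p
  | tail _ g ih => exact kle_tail ih g

lemma kellyLE_of_kle {k : ℕ} {p q : KellyIdx k} (h : KLE k p q) : kellyLE k p q := by
  rcases p with (j | j) | (i | i) <;> rcases q with (j' | j') | (i' | i') <;>
      simp only [KLE] at h
  · -- a ≤ a
    obtain rfl : j = j' := Fin.ext h
    exact Relation.ReflTransGen.refl
  · -- a ≤ b
    rcases lt_or_gt_of_ne h with hlt | hgt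
    · have hb : (j : ℕ) + 1 < k - 1 := by
        have := j'.isLt; omega
      refine Relation.ReflTransGen.head
        (show kellyGen k _ (Sum.inr (Sum.inl ⟨(j : ℕ) + 1, hb⟩)) from le_refl _)
        (Relation.ReflTransGen.single ?_)
      show ((⟨(j : ℕ) + 1, hb⟩ : Fin (k - 1)) : ℕ) ≤ (j' : ℕ)
      simpa using hlt
    · have hb : (j : ℕ) < k - 1 := by have := j.isLt; omega
      refine Relation.ReflTransGen.head
        (show kellyGen k _ (Sum.inr (Sum.inr ⟨(j : ℕ), hb⟩)) from le_refl _)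
        (Relation.ReflTransGen.single ?_)
      show (j' : ℕ) + 1 ≤ ((⟨(j : ℕ), hb⟩ : Fin (k - 1)) : ℕ)
      simpa using hgt
  · -- a ≤ c
    exact Relation.ReflTransGen.single h
  · -- a ≤ d
    exact Relation.ReflTransGen.single h
  · -- b ≤ b
    obtain rfl : j = j' := Fin.ext h
    exact Relation.ReflTransGen.refl
  · -- c ≤ b
    exact Relation.ReflTransGen.single h
  · -- c ≤ c
    rcases eq_or_lt_of_le h with heq | hlt
    · obtain rfl : i = i' := Fin.ext heq
      exact Relation.ReflTransGen.refl
    · exact Relation.ReflTransGen.single hlt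
  · -- d ≤ b
    exact Relation.ReflTransGen.single h
  · -- d ≤ d
    rcases eq_or_lt_of_le h with heq | hlt
    · obtain rfl : i = i' := Fin.ext heq.symm
      exact Relation.ReflTransGen.refl
    · exact Relation.ReflTransGen.single hlt

lemma kellyLE_iff_kle {k : ℕ} (p q : KellyIdx k) : kellyLE k p q ↔ KLE k p q :=
  ⟨kle_of_kellyLE, kellyLE_of_kle⟩

/-- The embedding of the standard example into the Kelly example. -/
def kphi (k : ℕ) (hk : 3 ≤ k) : Fin k ⊕ Fin k → KellyIdx k
  | Sum.inl i =>
    if _h0 : (i : ℕ) = 0 then Sum.inr (Sum.inl ⟨0, by omega⟩)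
    else if _h1 : (i : ℕ) ≤ k - 2 then Sum.inl (Sum.inl ⟨(i : ℕ) - 1, by omega⟩)
    else Sum.inr (Sum.inr ⟨k - 2, by omega⟩)
  | Sum.inr i =>
    if _h0 : (i : ℕ) = 0 then Sum.inr (Sum.inr ⟨0, by omega⟩)
    else if _h1 : (i : ℕ) ≤ k - 2 then Sum.inl (Sum.inr ⟨(i : ℕ) - 1, by omega⟩)
    else Sum.inr (Sum.inl ⟨k - 2, by omega⟩)

lemma kphi_order (k : ℕ) (hk : 3 ≤ k) (p q : Fin k ⊕ Fin k) :
    stdLE k p q ↔ KLE k (kphi k hk p) (kphi k hk q) := by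
  rcases p with i | i <;> rcases q with j | j <;>
    have hik := i.isLt <;> have hjk := j.isLt <;>
    simp only [kphi, stdLE, Fin.ext_iff] <;>
    split_ifs <;>
    simp only [KLE, Fin.val_mk, ne_eq, iff_false, false_iff, iff_true, true_iff] <;> omega

/-! ### STATEMENT 18: the Kelly example contains the standard example -/

theorem std_in_kelly (k : ℕ) (hk : 3 ≤ k) :
    ∃ φ : Fin k ⊕ Fin k → KellyIdx k,
      Function.Injective φ ∧
      (∀ p q, stdLE k p q ↔ kellyLE k (φ p) (φ q)) ∧
      (∀ i : Fin k, (i : ℕ) = 0 →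
        φ (Sum.inl i) = Sum.inr (Sum.inl ⟨0, by omega⟩)) ∧
      (∀ i : Fin k, ∀ _h1 : 1 ≤ (i : ℕ), ∀ _h2 : (i : ℕ) ≤ k - 2,
        φ (Sum.inl i) = Sum.inl (Sum.inl ⟨(i : ℕ) - 1, by omega⟩)) ∧
      (∀ i : Fin k, (i : ℕ) = k - 1 →
        φ (Sum.inl i) = Sum.inr (Sum.inr ⟨k - 2, by omega⟩)) ∧
      (∀ i : Fin k, (i : ℕ) = 0 →
        φ (Sum.inr i) = Sum.inr (Sum.inr ⟨0, by omega⟩)) ∧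
      (∀ i : Fin k, ∀ _h1 : 1 ≤ (i : ℕ), ∀ _h2 : (i : ℕ) ≤ k - 2,
        φ (Sum.inr i) = Sum.inl (Sum.inr ⟨(i : ℕ) - 1, by omega⟩)) ∧
      (∀ i : Fin k, (i : ℕ) = k - 1 →
        φ (Sum.inr i) = Sum.inr (Sum.inl ⟨k - 2, by omega⟩)) := by
  refine ⟨kphi k hk, ?_, ?_, ?_, ?_, ?_, ?_, ?_, ?_⟩
  · -- injectivity
    intro p q e
    have h1 : stdLE k p q := by
      rw [kphi_order k hk]
      exact kle_of_kellyLE (e ▸ Relation.ReflTransGen.refl)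
    have h2 : stdLE k q p := by
      rw [kphi_order k hk]
      exact kle_of_kellyLE (e ▸ Relation.ReflTransGen.refl)
    rcases p with i | i <;> rcases q with j | j <;>
      simp only [stdLE] at h1 h2 <;> exact congrArg _ h1
  · intro p q
    rw [kphi_order k hk, kellyLE_iff_kle]
  · intro i h
    simp only [kphi]
    rw [dif_pos h]
  · intro i h1 h2
    simp only [kphi]
    rw [dif_neg (by omega), dif_pos h2]
  · intro i h
    simp only [kphi]
    rw [dif_neg (by omega), dif_neg (by omega)]
  · intro i h
    simp only [kphi]
    rw [dif_pos h]
  · intro i h1 h2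
    simp only [kphi]
    rw [dif_neg (by omega), dif_pos h2]
  · intro i h
    simp only [kphi]
    rw [dif_neg (by omega), dif_neg (by omega)]
end
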